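/- Fix x ∈ (0,1) and d with 0 < d < min(x, 1−x)/2. Then there exist B < 1 and α₀ such that for all real α ≥ α₀, ∫_{D_>} β̃_α(t,x) dt ≤ B^α · √((α+2)/(2π x (1−x))), where D_> = {t ∈ [0,1] : |t − x| > d} and β̃_α(t,x) = t^{αx}(1−t)^{α(1−x)} / B(αx+1, α(1−x)+1) is the beta density with shape parameters αx+1 and α(1−x)+1. -/

import Mathlib

open MeasureTheory

/-- The Beta function `B(u,v) = Γ(u)Γ(v)/Γ(u+v)`. -/
noncomputable def betaFn (u v : ℝ) : ℝ :=
  Real.Gamma u * Real.Gamma v / Real.Gamma (u + v)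

/-- The real-parameter beta kernel: the beta density with shape parameters
`αx+1` and `α(1−x)+1`, i.e. `β̃_α(t,x) = t^(αx)(1−t)^(α(1−x)) / B(αx+1, α(1−x)+1)`. -/
noncomputable def betaKerR (α x t : ℝ) : ℝ :=
  t ^ (α * x) * (1 - t) ^ (α * (1 - x)) / betaFn (α * x + 1) (α * (1 - x) + 1)

lemma betaFn_eq_integral (p q : ℝ) (hp : 0 < p + 1) (hq : 0 < q + 1) :
    betaFn (p + 1) (q + 1) = ∫ t in (0:ℝ)..1, t ^ p * (1 - t) ^ q := by
  have hp' : 0 < ((p:ℂ) + 1).re := by simpa using hp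
  have hq' : 0 < ((q:ℂ) + 1).re := by simpa using hq
  have h := Complex.Gamma_mul_Gamma_eq_betaIntegral hp' hq'
  have key : Complex.betaIntegral ((p:ℂ) + 1) ((q:ℂ) + 1)
      = ((∫ t in (0:ℝ)..1, t ^ p * (1 - t) ^ q : ℝ) : ℂ) := by
    rw [Complex.betaIntegral, ← intervalIntegral.integral_ofReal]
    refine intervalIntegral.integral_congr fun t ht => ?_
    rw [Set.uIcc_of_le (by norm_num : (0:ℝ) ≤ 1)] at ht
    rw [Complex.ofReal_mul, Complex.ofReal_cpow ht.1,
      Complex.ofReal_cpow (by linarith [ht.2] : (0:ℝ) ≤ 1 - t)]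
    push_cast
    ring_nf
  rw [key] at h
  have hgam : Complex.Gamma ((p:ℂ) + 1) = (Real.Gamma (p + 1) : ℂ) := by
    rw [show ((p:ℂ) + 1) = ((p + 1 : ℝ) : ℂ) by push_cast; ring, Complex.Gamma_ofReal]
  have hgam' : Complex.Gamma ((q:ℂ) + 1) = (Real.Gamma (q + 1) : ℂ) := by
    rw [show ((q:ℂ) + 1) = ((q + 1 : ℝ) : ℂ) by push_cast; ring, Complex.Gamma_ofReal]
  have hgam'' : Complex.Gamma ((p:ℂ) + 1 + ((q:ℂ) + 1)) = (Real.Gamma (p + 1 + (q + 1)) : ℂ) := by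
    rw [show ((p:ℂ) + 1 + ((q:ℂ) + 1)) = ((p + 1 + (q + 1) : ℝ) : ℂ) by push_cast; ring,
      Complex.Gamma_ofReal]
  rw [hgam, hgam', hgam''] at h
  have h2 : Real.Gamma (p + 1) * Real.Gamma (q + 1)
      = Real.Gamma (p + 1 + (q + 1)) * ∫ t in (0:ℝ)..1, t ^ p * (1 - t) ^ q := by
    exact_mod_cast h
  have hpos : 0 < Real.Gamma (p + 1 + (q + 1)) := Real.Gamma_pos_of_pos (by linarith)
  rw [betaFn, h2]
  field_simp

noncomputable def fker (x t : ℝ) : ℝ := t ^ x * (1 - t) ^ (1 - x)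

lemma fker_pos {x t : ℝ} (h0 : 0 < t) (h1 : t < 1) : 0 < fker x t := by
  have : (0:ℝ) < 1 - t := by linarith
  unfold fker; positivity

lemma hasDerivAt_gaux (x : ℝ) {t : ℝ} (ht0 : t ≠ 0) (ht1 : t ≠ 1) :
    HasDerivAt (fun t => x * Real.log t + (1 - x) * Real.log (1 - t))
      (x / t - (1 - x) / (1 - t)) t := by
  have h1 : HasDerivAt (fun t : ℝ => x * Real.log t) (x * t⁻¹) t :=
    (Real.hasDerivAt_log ht0).const_mul x
  have h2 : HasDerivAt (fun t : ℝ => (1 - t)) (-1) t := by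
    simpa using (hasDerivAt_id t).const_sub 1
  have h3 : HasDerivAt (fun t : ℝ => Real.log (1 - t)) ((1 - t)⁻¹ * -1) t :=
    (Real.hasDerivAt_log (sub_ne_zero.2 (Ne.symm ht1))).comp t h2
  have := h1.add (h3.const_mul (1 - x))
  refine this.congr_deriv ?_
  ring

lemma continuousOn_gaux (x : ℝ) {s : Set ℝ} (hs : ∀ t ∈ s, t ≠ 0 ∧ t ≠ 1) :
    ContinuousOn (fun t => x * Real.log t + (1 - x) * Real.log (1 - t)) s := by
  intro t ht
  obtain ⟨h0, h1⟩ := hs t ht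
  exact ((continuousAt_const.mul (Real.continuousAt_log h0)).add
    (continuousAt_const.mul ((Real.continuousAt_log (sub_ne_zero.2 (Ne.symm h1))).comp
      (continuousAt_const.sub continuousAt_id)))).continuousWithinAt

lemma fker_eq_exp {x t : ℝ} (h0 : 0 < t) (h1 : t < 1) :
    fker x t = Real.exp (x * Real.log t + (1 - x) * Real.log (1 - t)) := by
  rw [fker, Real.rpow_def_of_pos h0, Real.rpow_def_of_pos (by linarith), ← Real.exp_add]
  ring_nf

lemma fker_strictMonoOn {x : ℝ} (hx : x ∈ Set.Ioo (0:ℝ) 1) :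
    StrictMonoOn (fker x) (Set.Icc 0 x) := by
  have hg : StrictMonoOn (fun t => x * Real.log t + (1 - x) * Real.log (1 - t))
      (Set.Ioc 0 x) := by
    apply strictMonoOn_of_deriv_pos (convex_Ioc 0 x)
    · exact continuousOn_gaux x fun t ht => ⟨ht.1.ne', by linarith [ht.2, hx.2]⟩
    · intro t ht
      rw [interior_Ioc] at ht
      have ht1 : t < 1 := lt_trans ht.2 hx.2
      rw [(hasDerivAt_gaux x ht.1.ne' ht1.ne).deriv]
      have hne0 : t ≠ 0 := ht.1.ne'
      have hne1 : (1:ℝ) - t ≠ 0 := by linarith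
      have he : x / t - (1 - x) / (1 - t) = (x - t) / (t * (1 - t)) := by
        field_simp; ring
      rw [he]
      apply div_pos (by linarith [ht.2]) (by nlinarith [ht.1, ht1])
  intro s hs t ht hst
  have ht0 : 0 < t := lt_of_le_of_lt hs.1 hst
  have ht1 : t < 1 := lt_of_le_of_lt ht.2 hx.2
  rcases eq_or_lt_of_le hs.1 with h0 | h0
  · rw [show s = 0 from h0.symm]
    have : fker x 0 = 0 := by
      simp [fker, Real.zero_rpow hx.1.ne']
    rw [this]; exact fker_pos ht0 ht1
  · rw [fker_eq_exp h0 (lt_of_le_of_lt hs.2 hx.2), fker_eq_exp ht0 ht1]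
    exact Real.exp_lt_exp.2 (hg ⟨h0, hs.2⟩ ⟨ht0, ht.2⟩ hst)

lemma fker_strictAntiOn {x : ℝ} (hx : x ∈ Set.Ioo (0:ℝ) 1) :
    StrictAntiOn (fker x) (Set.Icc x 1) := by
  have hg : StrictAntiOn (fun t => x * Real.log t + (1 - x) * Real.log (1 - t))
      (Set.Ico x 1) := by
    apply strictAntiOn_of_deriv_neg (convex_Ico x 1)
    · exact continuousOn_gaux x fun t ht => ⟨(lt_of_lt_of_le hx.1 ht.1).ne', ht.2.ne⟩
    · intro t ht
      rw [interior_Ico] at ht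
      have ht0 : 0 < t := lt_trans hx.1 ht.1
      rw [(hasDerivAt_gaux x ht0.ne' ht.2.ne).deriv]
      have hne0 : t ≠ 0 := ht0.ne'
      have hne1 : (1:ℝ) - t ≠ 0 := by linarith [ht.2]
      have he : x / t - (1 - x) / (1 - t) = (x - t) / (t * (1 - t)) := by
        field_simp; ring
      rw [he]
      apply div_neg_of_neg_of_pos (by linarith [ht.1]) (by nlinarith [ht.2])
  intro s hs t ht hst
  have hs0 : 0 < s := lt_of_lt_of_le hx.1 hs.1
  have hs1 : s < 1 := lt_of_lt_of_le hst ht.2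
  rcases eq_or_lt_of_le ht.2 with h1 | h1
  · rw [show t = 1 from h1]
    have : fker x 1 = 0 := by
      simp [fker, Real.zero_rpow (by intro h; nlinarith [hx.2] : (1:ℝ) - x ≠ 0)]
    rw [this]; exact fker_pos hs0 hs1
  · rw [fker_eq_exp hs0 hs1, fker_eq_exp (lt_of_lt_of_le hx.1 ht.1) h1]
    exact Real.exp_lt_exp.2 (hg ⟨hs.1, hs1⟩ ⟨ht.1, h1⟩ hst)

lemma fker_rpow {x t : ℝ} (α : ℝ) (ht0 : 0 ≤ t) (ht1 : t ≤ 1) :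
    fker x t ^ α = t ^ (α * x) * (1 - t) ^ (α * (1 - x)) := by
  rw [fker, Real.mul_rpow (Real.rpow_nonneg ht0 _) (Real.rpow_nonneg (by linarith) _),
    ← Real.rpow_mul ht0, ← Real.rpow_mul (by linarith : (0:ℝ) ≤ 1 - t),
    mul_comm x α, mul_comm (1 - x) α]

set_option maxHeartbeats 2000000 in
theorem stmt_4 (x d : ℝ) (hx : x ∈ Set.Ioo (0:ℝ) 1) (hd : 0 < d)
    (hd' : d < min x (1 - x) / 2) :
    ∃ B : ℝ, B < 1 ∧ ∃ α₀ : ℝ, ∀ α : ℝ, α₀ ≤ α →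
      (∫ t in {t : ℝ | t ∈ Set.Icc (0:ℝ) 1 ∧ |t - x| > d}, betaKerR α x t) ≤
        B ^ α * Real.sqrt ((α + 2) / (2 * Real.pi * x * (1 - x))) := by
  obtain ⟨hx0, hx1⟩ := hx
  have hdx : d < x / 2 := by
    have := min_le_left x (1 - x); linarith
  have hdy : d < (1 - x) / 2 := by
    have := min_le_right x (1 - x); linarith
  -- memberships
  have hm1 : x - d ∈ Set.Icc (0:ℝ) x := ⟨by linarith, by linarith⟩
  have hm2 : x - d / 2 ∈ Set.Icc (0:ℝ) x := ⟨by linarith, by linarith⟩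
  have hm3 : x + d ∈ Set.Icc x 1 := ⟨by linarith, by linarith⟩
  have hm4 : x + d / 2 ∈ Set.Icc x 1 := ⟨by linarith, by linarith⟩
  set a1 := fker x (x - d) with ha1
  set a2 := fker x (x + d) with ha2
  set b1 := fker x (x - d / 2) with hb1
  set b2 := fker x (x + d / 2) with hb2
  have ha1b1 : a1 < b1 := fker_strictMonoOn ⟨hx0, hx1⟩ hm1 hm2 (by linarith)
  have ha2b2 : a2 < b2 := fker_strictAntiOn ⟨hx0, hx1⟩ hm4 hm3 (by linarith)
  set m1 := max a1 a2 with hm1'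
  set m2 := max b1 b2 with hm2'
  have hm1pos : 0 < m1 := lt_of_lt_of_le (fker_pos (by linarith) (by linarith)) (le_max_left _ _)
  have hb1pos : 0 < b1 := fker_pos (by linarith) (by linarith)
  have hb2pos : 0 < b2 := fker_pos (by linarith) (by linarith)
  have hm2pos : 0 < m2 := lt_of_lt_of_le hb1pos (le_max_left _ _)
  have h12 : m1 < m2 := max_lt (lt_of_lt_of_le ha1b1 (le_max_left _ _))
    (lt_of_lt_of_le ha2b2 (le_max_right _ _))
  set r := m1 / m2 with hr'
  have hr0 : 0 < r := div_pos hm1pos hm2pos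
  have hr1 : r < 1 := (div_lt_one hm2pos).2 h12
  set B := (1 + r) / 2 with hB'
  have hB0 : 0 < B := by positivity
  have hB1 : B < 1 := by rw [hB']; linarith
  have hrB : r < B := by rw [hB']; linarith
  have hrB1 : r / B < 1 := (div_lt_one hB0).2 hrB
  refine ⟨B, hB1, ?_⟩
  have htend : Filter.Tendsto (fun α : ℝ => (r / B) ^ α) Filter.atTop (nhds 0) :=
    tendsto_rpow_atTop_of_base_lt_one _ (by have := div_pos hr0 hB0; linarith) hrB1
  have hev : ∀ᶠ α : ℝ in Filter.atTop, (r / B) ^ α < d / 2 :=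
    htend.eventually (gt_mem_nhds (by positivity))
  obtain ⟨α₁, hα₁⟩ := Filter.eventually_atTop.mp hev
  refine ⟨max α₁ 1, fun α hα => ?_⟩
  have hα1 : 1 ≤ α := le_trans (le_max_right _ _) hα
  have hα0 : 0 ≤ α := by linarith
  have hαr : (r / B) ^ α < d / 2 := hα₁ α (le_trans (le_max_left _ _) hα)
  -- the integrand function
  set F := fun t : ℝ => t ^ (α * x) * (1 - t) ^ (α * (1 - x)) with hF'
  have hpx : 0 < α * x := by nlinarith
  have hpy : 0 < α * (1 - x) := by nlinarith
  have hFc : Continuous F := by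
    apply Continuous.mul
    · exact continuous_iff_continuousAt.2 fun t =>
        Real.continuousAt_rpow_const t _ (Or.inr hpx.le)
    · exact continuous_iff_continuousAt.2 fun t =>
        (Real.continuousAt_rpow_const _ _ (Or.inr hpy.le)).comp
          (continuousAt_const.sub continuousAt_id)
  have hFnn : ∀ t : ℝ, 0 ≤ t → t ≤ 1 → 0 ≤ F t := fun t ht ht1 =>
    mul_nonneg (Real.rpow_nonneg ht _) (Real.rpow_nonneg (by linarith) _)
  -- denominator
  have hD : betaFn (α * x + 1) (α * (1 - x) + 1) = ∫ t in Set.Ioc (0:ℝ) 1, F t := by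
    rw [betaFn_eq_integral _ _ (by linarith) (by linarith),
      intervalIntegral.integral_of_le (by norm_num : (0:ℝ) ≤ 1)]
  have hDlow : d / 2 * m2 ^ α ≤ ∫ t in Set.Ioc (0:ℝ) 1, F t := by
    have key : ∀ J : Set ℝ, J ⊆ Set.Ioc (0:ℝ) 1 → MeasurableSet J →
        (volume J).toReal = d / 2 → (∀ t ∈ J, m2 ^ α ≤ F t) →
        d / 2 * m2 ^ α ≤ ∫ t in Set.Ioc (0:ℝ) 1, F t := by
      intro J hJsub hJmeas hJvol hJle
      have hJfin : volume J < ⊤ := by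
        refine lt_of_le_of_lt (measure_mono hJsub) ?_
        exact lt_of_le_of_lt (measure_mono Set.Ioc_subset_Icc_self) measure_Icc_lt_top
      calc d / 2 * m2 ^ α = ∫ _ in J, m2 ^ α := by
              rw [setIntegral_const, smul_eq_mul, measureReal_def, hJvol]
        _ ≤ ∫ t in J, F t := by
              refine setIntegral_mono_on (integrableOn_const hJfin.ne)
                (hFc.integrableOn_Icc.mono_set
                  (fun t ht => Set.Ioc_subset_Icc_self (hJsub ht))) hJmeas hJle
        _ ≤ ∫ t in Set.Ioc (0:ℝ) 1, F t := by
              refine setIntegral_mono_set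
                (hFc.integrableOn_Icc.mono_set Set.Ioc_subset_Icc_self) ?_
                (HasSubset.Subset.eventuallyLE hJsub)
              exact (ae_restrict_iff' measurableSet_Ioc).2
                (Filter.Eventually.of_forall fun t ht => hFnn t ht.1.le ht.2)
    rcases le_total b2 b1 with hcase | hcase
    · have hm2b : m2 = b1 := max_eq_left hcase
      refine key (Set.Icc (x - d / 2) x) (fun t ht => ⟨by linarith [ht.1], by linarith [ht.2]⟩)
        measurableSet_Icc (by rw [Real.volume_Icc]; rw [ENNReal.toReal_ofReal (by linarith)]; ring) ?_
      intro t ht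
      have ht' : t ∈ Set.Icc (0:ℝ) x := ⟨by linarith [ht.1], ht.2⟩
      have hle : m2 ≤ fker x t := by
        rw [hm2b]
        exact (fker_strictMonoOn ⟨hx0, hx1⟩).monotoneOn hm2 ht' ht.1
      calc m2 ^ α ≤ fker x t ^ α := Real.rpow_le_rpow hm2pos.le hle hα0
        _ = F t := fker_rpow α (by linarith [ht.1]) (by linarith [ht.2])
    · have hm2b : m2 = b2 := max_eq_right hcase
      refine key (Set.Icc x (x + d / 2)) (fun t ht => ⟨by linarith [ht.1], by linarith [ht.2]⟩)
        measurableSet_Icc (by rw [Real.volume_Icc]; rw [ENNReal.toReal_ofReal (by linarith)]; ring) ?_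
      intro t ht
      have ht' : t ∈ Set.Icc x 1 := ⟨ht.1, by linarith [ht.2]⟩
      have hle : m2 ≤ fker x t := by
        rw [hm2b]
        exact (fker_strictAntiOn ⟨hx0, hx1⟩).antitoneOn ht' hm4 ht.2
      calc m2 ^ α ≤ fker x t ^ α := Real.rpow_le_rpow hm2pos.le hle hα0
        _ = F t := fker_rpow α (by linarith [ht.1]) (by linarith [ht.2])
  have hDpos : 0 < ∫ t in Set.Ioc (0:ℝ) 1, F t :=
    lt_of_lt_of_le (by positivity) hDlow
  -- numerator
  set S := {t : ℝ | t ∈ Set.Icc (0:ℝ) 1 ∧ |t - x| > d} with hS'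
  have hSmeas : MeasurableSet S := by
    have : S = Set.Icc (0:ℝ) 1 ∩ {t : ℝ | d < |t - x|} := rfl
    rw [this]
    exact measurableSet_Icc.inter
      (measurableSet_lt measurable_const ((continuous_id.sub continuous_const).abs.measurable))
  have hSfin : volume S < ⊤ :=
    lt_of_le_of_lt (measure_mono fun t ht => ht.1) measure_Icc_lt_top
  have hbound : ∀ t ∈ S, ‖F t‖ ≤ m1 ^ α := by
    rintro t ⟨hts, htd⟩
    rw [Real.norm_of_nonneg (hFnn t hts.1 hts.2)]
    have hfle : fker x t ≤ m1 := by
      rcases lt_abs.mp htd with h | h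
      · -- t > x + d
        have ht' : t ∈ Set.Icc x 1 := ⟨by linarith, hts.2⟩
        refine le_trans ?_ (le_max_right a1 a2)
        exact (fker_strictAntiOn ⟨hx0, hx1⟩).antitoneOn hm3 ht' (by linarith)
      · -- t < x - d
        have ht' : t ∈ Set.Icc (0:ℝ) x := ⟨hts.1, by linarith⟩
        refine le_trans ?_ (le_max_left a1 a2)
        exact (fker_strictMonoOn ⟨hx0, hx1⟩).monotoneOn ht' hm1 (by linarith)
    calc F t = fker x t ^ α := (fker_rpow α hts.1 hts.2).symm
      _ ≤ m1 ^ α := Real.rpow_le_rpow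
          (mul_nonneg (Real.rpow_nonneg hts.1 _)
            (Real.rpow_nonneg (by linarith [hts.2] : (0:ℝ) ≤ 1 - t) _)) hfle hα0
  have hNum : ∫ t in S, F t ≤ m1 ^ α := by
    have h := norm_setIntegral_le_of_norm_le_const hSfin hbound
    have hvol : (volume S).toReal ≤ 1 := by
      have h1 : volume S ≤ volume (Set.Icc (0:ℝ) 1) := measure_mono fun t ht => ht.1
      have h2 : (volume S).toReal ≤ (volume (Set.Icc (0:ℝ) 1)).toReal :=
        ENNReal.toReal_mono measure_Icc_lt_top.ne h1
      simpa [Real.volume_Icc] using h2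
    calc ∫ t in S, F t ≤ ‖∫ t in S, F t‖ := le_abs_self _
      _ ≤ m1 ^ α * (volume S).toReal := h
      _ ≤ m1 ^ α * 1 := mul_le_mul_of_nonneg_left hvol (Real.rpow_nonneg hm1pos.le α)
      _ = m1 ^ α := mul_one _
  -- final chain
  have hsqrt : 1 ≤ Real.sqrt ((α + 2) / (2 * Real.pi * x * (1 - x))) := by
    have hden : (0:ℝ) < 2 * Real.pi * x * (1 - x) :=
      mul_pos (mul_pos (mul_pos two_pos Real.pi_pos) hx0) (by linarith)
    have h1 : 1 ≤ (α + 2) / (2 * Real.pi * x * (1 - x)) := by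
      rw [le_div_iff₀ hden]
      have hq : x * (1 - x) ≤ 1 / 4 := by nlinarith [sq_nonneg (x - 1/2)]
      have hxq : (0:ℝ) ≤ x * (1 - x) := by nlinarith
      have h8 : 2 * Real.pi ≤ 8 := by nlinarith [Real.pi_le_four]
      have := mul_le_mul h8 hq hxq (by norm_num : (0:ℝ) ≤ 8)
      nlinarith
    calc (1:ℝ) = Real.sqrt 1 := Real.sqrt_one.symm
      _ ≤ _ := Real.sqrt_le_sqrt h1
  have hmain : (∫ t in S, betaKerR α x t) ≤ B ^ α := by
    have heq : (∫ t in S, betaKerR α x t)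
        = (∫ t in S, F t) / ∫ t in Set.Ioc (0:ℝ) 1, F t := by
      simp only [betaKerR]
      rw [integral_div, hD]
    rw [heq]
    have step1 : (∫ t in S, F t) / (∫ t in Set.Ioc (0:ℝ) 1, F t)
        ≤ m1 ^ α / (d / 2 * m2 ^ α) :=
      div_le_div₀ (Real.rpow_nonneg hm1pos.le α) hNum (by positivity) hDlow
    have step2 : m1 ^ α / (d / 2 * m2 ^ α) = 2 / d * r ^ α := by
      rw [hr', Real.div_rpow hm1pos.le hm2pos.le]
      have hm2ne : m2 ^ α ≠ 0 := ne_of_gt (Real.rpow_pos_of_pos hm2pos α)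
      field_simp
    have step3 : 2 / d * r ^ α ≤ B ^ α := by
      have hrw : r ^ α = (r / B) ^ α * B ^ α := by
        rw [← Real.mul_rpow (by positivity) hB0.le, div_mul_cancel₀ _ hB0.ne']
      have h1 : 2 / d * (r / B) ^ α ≤ 1 := by
        calc 2 / d * (r / B) ^ α ≤ 2 / d * (d / 2) :=
              mul_le_mul_of_nonneg_left hαr.le (by positivity)
          _ = 1 := by field_simp
      calc 2 / d * r ^ α = 2 / d * (r / B) ^ α * B ^ α := by rw [hrw]; ring
        _ ≤ 1 * B ^ α := mul_le_mul_of_nonneg_right h1 (Real.rpow_nonneg hB0.le α)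
        _ = B ^ α := one_mul _
    calc (∫ t in S, F t) / (∫ t in Set.Ioc (0:ℝ) 1, F t) ≤ m1 ^ α / (d / 2 * m2 ^ α) := step1
      _ = 2 / d * r ^ α := step2
      _ ≤ B ^ α := step3
  calc (∫ t in S, betaKerR α x t) ≤ B ^ α := hmain
    _ = B ^ α * 1 := (mul_one _).symm
    _ ≤ B ^ α * Real.sqrt ((α + 2) / (2 * Real.pi * x * (1 - x))) :=
        mul_le_mul_of_nonneg_left hsqrt (Real.rpow_nonneg hB0.le α)
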